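/- Let (E,F) be a Maximum Online Set instance, let E' be the set of non-isolated elements of E, let k be the number of isolated elements, and let s(E',F) be the minimum size of a subset S ⊆ E' containing no forbidden subset such that adding any element of E' \ S to S yields a set containing a forbidden subset. If k + s(E',F) ≥ MS^O(E',F), then GMOS(E,F) = MS^O(E,F); that is, the greedy algorithm achieves the optimal worst-case number of accepted elements among all online algorithms. -/
import Mathlib


namespace OnlinePaper

noncomputable instance {α : Type} [Fintype α] {p : α → Prop} : Fintype {v : α // p v} :=
  Fintype.ofFinite _

/-- A deterministic online algorithm for Maximum Online Set: given the number `n` of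
previously revealed elements and, for each step `i ≤ n`, the predicate telling which
subsets `A` of the elements revealed before step `i` are such that `A` together with the
element revealed at step `i` forms a forbidden set, decide whether to accept the element
revealed at step `n`.  (Since the family of forbidden sets is closed under supersets, this
monotone predicate carries exactly the same information as the list of all minimal such
subsets `A`, which is what each request reveals.) -/
def MOSAlg : Type := (n : ℕ) → ((i : Fin (n + 1)) → Finset (Fin i.val) → Bool) → Bool

variable {E : Type}

/-- The information revealed up to step `n` when the elements arrive in the order `φ` and
the forbidden family is `F`. -/
noncomputable def mosHistory [Fintype E] [DecidableEq E] (F : Set (Finset E))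
    (φ : Fin (Fintype.card E) ≃ E) (n : Fin (Fintype.card E)) :
    (i : Fin (n.val + 1)) → Finset (Fin i.val) → Bool :=
  fun i A =>
    @decide ((insert (φ ⟨i.val, by have := i.isLt; have := n.isLt; omega⟩)
        (A.image (fun a => φ ⟨a.val, by
          have := a.isLt; have := i.isLt; have := n.isLt; omega⟩))) ∈ F)
      (Classical.propDecidable _)

/-- Whether the algorithm `A` accepts the element revealed at step `i`. -/
noncomputable def mosAccepts [Fintype E] [DecidableEq E] (A : MOSAlg) (F : Set (Finset E))
    (φ : Fin (Fintype.card E) ≃ E) (i : Fin (Fintype.card E)) : Bool :=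
  A i.val (mosHistory F φ i)

/-- The set of elements accepted by `A` when the elements arrive in the order `φ`. -/
noncomputable def mosAcceptedSet [Fintype E] [DecidableEq E] (A : MOSAlg)
    (F : Set (Finset E)) (φ : Fin (Fintype.card E) ≃ E) : Finset E :=
  Finset.univ.filter (fun e => mosAccepts A F φ (φ.symm e) = true)

/-- A solution is feasible if it contains no forbidden subset. -/
def MOSFeasible (F : Set (Finset E)) (s : Finset E) : Prop := ∀ B ∈ F, ¬ B ⊆ s

/-- The worst-case (minimum over orderings) number of elements accepted by `A`. -/
noncomputable def mosMinScore [Fintype E] [DecidableEq E] (A : MOSAlg)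
    (F : Set (Finset E)) : ℕ :=
  sInf {m | ∃ φ : Fin (Fintype.card E) ≃ E, (mosAcceptedSet A F φ).card = m}

/-- The optimal online value `MS^O(E, F)`: the largest `m` such that some online algorithm
accepts, on every ordering, a feasible set of at least `m` elements. -/
noncomputable def mosOnlineNum [Fintype E] [DecidableEq E] (F : Set (Finset E)) : ℕ :=
  sSup {m | ∃ A : MOSAlg, ∀ φ : Fin (Fintype.card E) ≃ E,
      MOSFeasible F (mosAcceptedSet A F φ) ∧ m ≤ (mosAcceptedSet A F φ).card}

/-- The greedy decision: accept the newly revealed element iff the set of elements accepted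
so far (by the same greedy rule) together with the new element contains no forbidden
subset. -/
def gmosAux : (n : ℕ) → ((i : Fin (n + 1)) → Finset (Fin i.val) → Bool) → Bool
  | n, H =>
    !(H (Fin.last n) (Finset.univ.filter (fun j : Fin n =>
      gmosAux j.val (fun i A => H ⟨i.val, by have := i.isLt; have := j.isLt; omega⟩ A)
        = true)))
termination_by n => n
decreasing_by all_goals exact Fin.isLt _

/-- `GMOS`, the greedy algorithm for Maximum Online Set. -/
def gmosAlg : MOSAlg := fun n H => gmosAux n H

/-- An element is isolated if it belongs to no forbidden set. -/
def MOSIsolated (F : Set (Finset E)) (e : E) : Prop := ∀ B ∈ F, e ∉ B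

/-- The instance `(E', F)` restricted to the non-isolated elements: the forbidden sets are
the members of `F` contained in `E'`. -/
def mosRestrict [DecidableEq E] (F : Set (Finset E)) :
    Set (Finset {e : E // ¬ MOSIsolated F e}) :=
  {B | B.image Subtype.val ∈ F}

/-- `s(E, F)`: the minimum size of a feasible set `S` such that adding any further element
to `S` yields a set containing a forbidden subset. -/
noncomputable def mosIndepDomNum [DecidableEq E] (F : Set (Finset E)) : ℕ :=
  sInf {m | ∃ S : Finset E, MOSFeasible F S ∧
    (∀ e ∉ S, ¬ MOSFeasible F (insert e S)) ∧ S.card = m}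
set_option linter.unusedSectionVars false

open Classical

noncomputable def accUpTo [Fintype E] [DecidableEq E] (F : Set (Finset E))
    (φ : Fin (Fintype.card E) ≃ E) (i : ℕ) : Finset E :=
  (Finset.univ.filter (fun j : Fin (Fintype.card E) =>
      j.val < i ∧ mosAccepts gmosAlg F φ j = true)).image φ

lemma gmos_accepts_iff [Fintype E] [DecidableEq E] (F : Set (Finset E))
    (φ : Fin (Fintype.card E) ≃ E) (i : Fin (Fintype.card E)) :
    mosAccepts gmosAlg F φ i = true ↔ insert (φ i) (accUpTo F φ i.val) ∉ F := by
  show gmosAux i.val (mosHistory F φ i) = true ↔ _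
  rw [gmosAux]
  have hrec : ∀ (a : Fin i.val),
      (gmosAux a.val (fun i' A => mosHistory F φ i ⟨i'.val, by have := i'.isLt; have := a.isLt; omega⟩ A))
        = mosAccepts gmosAlg F φ ⟨a.val, lt_trans a.isLt i.isLt⟩ := fun a => rfl
  simp only [hrec]
  show (!(@decide _ (Classical.propDecidable _)) : Bool) = true ↔ _
  rw [Bool.not_eq_true', decide_eq_false_iff_not]
  apply not_congr
  apply iff_of_eq
  congr 1
  · congr 1
    ext e
    simp only [Finset.mem_image, Finset.mem_filter, Finset.mem_univ, true_and, accUpTo]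
    constructor
    · rintro ⟨a, ha, rfl⟩
      exact ⟨⟨a.val, lt_trans a.isLt i.isLt⟩, ⟨a.isLt, ha⟩, rfl⟩
    · rintro ⟨j, ⟨hj, hjacc⟩, rfl⟩
      exact ⟨⟨j.val, hj⟩, hjacc, rfl⟩

variable [Fintype E] [DecidableEq E]

lemma accUpTo_mono (F : Set (Finset E)) (φ : Fin (Fintype.card E) ≃ E) {i i' : ℕ}
    (h : i ≤ i') : accUpTo F φ i ⊆ accUpTo F φ i' := by
  apply Finset.image_subset_image
  intro j hj
  simp only [Finset.mem_filter] at *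
  exact ⟨hj.1, lt_of_lt_of_le hj.2.1 h, hj.2.2⟩

lemma accUpTo_succ (F : Set (Finset E)) (φ : Fin (Fintype.card E) ≃ E) (i : ℕ) :
    (∃ hi : i < Fintype.card E, mosAccepts gmosAlg F φ ⟨i, hi⟩ = true ∧
        accUpTo F φ (i+1) = insert (φ ⟨i, hi⟩) (accUpTo F φ i)) ∨
      accUpTo F φ (i+1) = accUpTo F φ i := by
  by_cases hi : i < Fintype.card E
  · by_cases hacc : mosAccepts gmosAlg F φ ⟨i, hi⟩ = true
    · refine Or.inl ⟨hi, hacc, ?_⟩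
      ext e
      simp only [accUpTo, Finset.mem_image, Finset.mem_filter, Finset.mem_univ, true_and,
        Finset.mem_insert]
      constructor
      · rintro ⟨j, ⟨hj, hjacc⟩, rfl⟩
        rcases Nat.lt_succ_iff_lt_or_eq.mp hj with hj' | hj'
        · exact Or.inr ⟨j, ⟨hj', hjacc⟩, rfl⟩
        · left; congr 1; exact Fin.ext hj'
      · rintro (rfl | ⟨j, ⟨hj, hjacc⟩, rfl⟩)
        · exact ⟨⟨i, hi⟩, ⟨Nat.lt_succ_self i, hacc⟩, rfl⟩
        · exact ⟨j, ⟨Nat.lt_succ_of_lt hj, hjacc⟩, rfl⟩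
    · refine Or.inr ?_
      ext e
      simp only [accUpTo, Finset.mem_image, Finset.mem_filter, Finset.mem_univ, true_and]
      constructor
      · rintro ⟨j, ⟨hj, hjacc⟩, rfl⟩
        rcases Nat.lt_succ_iff_lt_or_eq.mp hj with hj' | hj'
        · exact ⟨j, ⟨hj', hjacc⟩, rfl⟩
        · exact absurd (by rwa [show j = ⟨i, hi⟩ from Fin.ext hj'] at hjacc) hacc
      · rintro ⟨j, ⟨hj, hjacc⟩, rfl⟩
        exact ⟨j, ⟨Nat.lt_succ_of_lt hj, hjacc⟩, rfl⟩
  · refine Or.inr ?_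
    ext e
    simp only [accUpTo, Finset.mem_image, Finset.mem_filter, Finset.mem_univ, true_and]
    constructor
    · rintro ⟨j, ⟨hj, hjacc⟩, rfl⟩
      exact ⟨j, ⟨by have := j.isLt; omega, hjacc⟩, rfl⟩
    · rintro ⟨j, ⟨hj, hjacc⟩, rfl⟩
      exact ⟨j, ⟨Nat.lt_succ_of_lt hj, hjacc⟩, rfl⟩

lemma accUpTo_notMem (F : Set (Finset E)) (φ : Fin (Fintype.card E) ≃ E)
    (h0 : ∅ ∉ F) : ∀ i, accUpTo F φ i ∉ F := by
  intro i
  induction i with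
  | zero =>
      have : accUpTo F φ 0 = ∅ := by
        ext e; simp [accUpTo]
      rwa [this]
  | succ i ih =>
      rcases accUpTo_succ F φ i with ⟨hi, hacc, heq⟩ | heq
      · rw [heq]
        exact (gmos_accepts_iff F φ ⟨i, hi⟩).mp hacc
      · rwa [heq]

lemma acceptedSet_eq (F : Set (Finset E)) (φ : Fin (Fintype.card E) ≃ E) :
    mosAcceptedSet gmosAlg F φ = accUpTo F φ (Fintype.card E) := by
  ext e
  simp only [mosAcceptedSet, accUpTo, Finset.mem_image, Finset.mem_filter, Finset.mem_univ,
    true_and]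
  constructor
  · intro hacc
    exact ⟨φ.symm e, ⟨(φ.symm e).isLt, hacc⟩, φ.apply_symm_apply e⟩
  · rintro ⟨j, ⟨_, hjacc⟩, rfl⟩
    rwa [φ.symm_apply_apply]

lemma gmos_feasible (F : Set (Finset E)) (hF : ∀ B ∈ F, ∀ C : Finset E, B ⊆ C → C ∈ F)
    (h0 : ∅ ∉ F) (φ : Fin (Fintype.card E) ≃ E) :
    MOSFeasible F (mosAcceptedSet gmosAlg F φ) := by
  intro B hB hsub
  exact accUpTo_notMem F φ h0 (Fintype.card E)
    (acceptedSet_eq F φ ▸ hF B hB _ hsub)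

lemma gmos_maximal (F : Set (Finset E)) (hF : ∀ B ∈ F, ∀ C : Finset E, B ⊆ C → C ∈ F)
    (φ : Fin (Fintype.card E) ≃ E) {e : E} (he : e ∉ mosAcceptedSet gmosAlg F φ) :
    insert e (mosAcceptedSet gmosAlg F φ) ∈ F := by
  have hne : mosAccepts gmosAlg F φ (φ.symm e) ≠ true := by
    intro hacc
    exact he (by simp [mosAcceptedSet, hacc])
  have hmem : insert (φ (φ.symm e)) (accUpTo F φ (φ.symm e).val) ∈ F := by
    by_contra hc
    exact hne ((gmos_accepts_iff F φ (φ.symm e)).mpr hc)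
  rw [φ.apply_symm_apply] at hmem
  apply hF _ hmem
  rw [acceptedSet_eq]
  exact Finset.insert_subset_insert e (accUpTo_mono F φ (le_of_lt (φ.symm e).isLt))

section Transfer
variable [Fintype E] [DecidableEq E] (F : Set (Finset E))
  (hni : ∀ e : E, ¬ MOSIsolated F e)

lemma card_nonIso (hni : ∀ e : E, ¬ MOSIsolated F e) :
    Fintype.card {e : E // ¬ MOSIsolated F e} = Fintype.card E :=
  Fintype.card_congr (Equiv.subtypeUnivEquiv hni)

lemma accepts_restrict (A : MOSAlg)
    (φ' : Fin (Fintype.card {e : E // ¬ MOSIsolated F e}) ≃ {e : E // ¬ MOSIsolated F e})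
    (i' : Fin (Fintype.card {e : E // ¬ MOSIsolated F e})) :
    mosAccepts A (mosRestrict F) φ' i' =
      mosAccepts A F
        ((finCongr (card_nonIso F hni).symm).trans (φ'.trans (Equiv.subtypeUnivEquiv hni)))
        (finCongr (card_nonIso F hni) i') := by
  unfold mosAccepts
  congr 1
  funext i A'
  unfold mosHistory
  rw [decide_eq_decide]
  simp only [mosRestrict, Set.mem_setOf_eq, Finset.image_insert, Finset.image_image]
  rfl

lemma acceptedSet_restrict (A : MOSAlg)
    (φ' : Fin (Fintype.card {e : E // ¬ MOSIsolated F e}) ≃ {e : E // ¬ MOSIsolated F e}) :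
    (mosAcceptedSet A (mosRestrict F) φ').image Subtype.val =
      mosAcceptedSet A F
        ((finCongr (card_nonIso F hni).symm).trans (φ'.trans (Equiv.subtypeUnivEquiv hni))) := by
  ext e
  simp only [Finset.mem_image, mosAcceptedSet, Finset.mem_filter, Finset.mem_univ, true_and]
  constructor
  · rintro ⟨e', hacc, rfl⟩
    rw [accepts_restrict F hni] at hacc
    exact hacc
  · intro hacc
    refine ⟨⟨e, hni e⟩, ?_, rfl⟩
    rw [accepts_restrict F hni]
    exact hacc

end Transfer
lemma mso_le_card [Fintype E] [DecidableEq E] (F : Set (Finset E)) :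
    mosOnlineNum F ≤ Fintype.card E := by
  unfold mosOnlineNum
  rcases Set.eq_empty_or_nonempty {m | ∃ A : MOSAlg, ∀ φ : Fin (Fintype.card E) ≃ E,
      MOSFeasible F (mosAcceptedSet A F φ) ∧ m ≤ (mosAcceptedSet A F φ).card} with he | hne
  · rw [he, csSup_empty]; exact Nat.zero_le _
  · apply csSup_le hne
    rintro m ⟨A, hA⟩
    exact le_trans (hA (Fintype.equivFin E).symm).2 (Finset.card_le_univ _)

lemma mso_bddAbove [Fintype E] [DecidableEq E] (F : Set (Finset E)) :
    BddAbove {m | ∃ A : MOSAlg, ∀ φ : Fin (Fintype.card E) ≃ E,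
      MOSFeasible F (mosAcceptedSet A F φ) ∧ m ≤ (mosAcceptedSet A F φ).card} := by
  refine ⟨Fintype.card E, ?_⟩
  rintro m ⟨A, hA⟩
  exact le_trans (hA (Fintype.equivFin E).symm).2 (Finset.card_le_univ _)

lemma gmos_le_mso [Fintype E] [DecidableEq E] (F : Set (Finset E))
    (hF : ∀ B ∈ F, ∀ C : Finset E, B ⊆ C → C ∈ F) (h0 : ∅ ∉ F) :
    mosMinScore gmosAlg F ≤ mosOnlineNum F := by
  apply le_csSup (mso_bddAbove F)
  refine ⟨gmosAlg, fun φ => ⟨gmos_feasible F hF h0 φ, Nat.sInf_le ⟨φ, rfl⟩⟩⟩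

lemma case_empty_mem [Fintype E] [DecidableEq E] (F : Set (Finset E))
    (hF : ∀ B ∈ F, ∀ C : Finset E, B ⊆ C → C ∈ F) (h0 : ∅ ∈ F) :
    mosMinScore gmosAlg F = mosOnlineNum F := by
  have hrej : ∀ (φ : Fin (Fintype.card E) ≃ E) (i : Fin (Fintype.card E)),
      mosAccepts gmosAlg F φ i ≠ true := by
    intro φ i hacc
    exact (gmos_accepts_iff F φ i).mp hacc (hF ∅ h0 _ (Finset.empty_subset _))
  have hacc : ∀ φ : Fin (Fintype.card E) ≃ E, mosAcceptedSet gmosAlg F φ = ∅ := by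
    intro φ
    ext e
    simp only [mosAcceptedSet, Finset.mem_filter, Finset.mem_univ, true_and,
      Finset.notMem_empty, iff_false]
    exact hrej φ _
  have h1 : mosMinScore gmosAlg F = 0 := by
    apply Nat.eq_zero_of_le_zero
    apply Nat.sInf_le
    exact ⟨(Fintype.equivFin E).symm, by rw [hacc]; simp⟩
  have h2 : mosOnlineNum F = 0 := by
    unfold mosOnlineNum
    have : {m | ∃ A : MOSAlg, ∀ φ : Fin (Fintype.card E) ≃ E,
        MOSFeasible F (mosAcceptedSet A F φ) ∧ m ≤ (mosAcceptedSet A F φ).card} = ∅ := by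
      ext m
      simp only [Set.mem_setOf_eq, Set.mem_empty_iff_false, iff_false, not_exists]
      intro A hA
      exact (hA (Fintype.equivFin E).symm).1 ∅ h0 (Finset.empty_subset _)
    rw [this, csSup_empty]
    rfl
  rw [h1, h2]

lemma case_F_empty [Fintype E] [DecidableEq E] (F : Set (Finset E)) (hFe : F = ∅) :
    mosMinScore gmosAlg F = Fintype.card E := by
  have hacc : ∀ (φ : Fin (Fintype.card E) ≃ E) (i : Fin (Fintype.card E)),
      mosAccepts gmosAlg F φ i = true := by
    intro φ i
    rw [gmos_accepts_iff]
    rw [hFe]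
    exact Set.notMem_empty _
  have hset : ∀ φ : Fin (Fintype.card E) ≃ E,
      mosAcceptedSet gmosAlg F φ = Finset.univ := by
    intro φ
    ext e
    simp [mosAcceptedSet, hacc]
  have : {m | ∃ φ : Fin (Fintype.card E) ≃ E, (mosAcceptedSet gmosAlg F φ).card = m}
      = {Fintype.card E} := by
    ext m
    simp only [Set.mem_setOf_eq, Set.mem_singleton_iff]
    constructor
    · rintro ⟨φ, rfl⟩; rw [hset φ]; exact Finset.card_univ
    · rintro rfl; exact ⟨(Fintype.equivFin E).symm, by rw [hset]; exact Finset.card_univ⟩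
  unfold mosMinScore
  rw [this, csInf_singleton]
lemma mso_le_restrict [Fintype E] [DecidableEq E] (F : Set (Finset E)) (h0 : ∅ ∉ F)
    (hni : ∀ e : E, ¬ MOSIsolated F e) :
    mosOnlineNum F ≤ mosOnlineNum (mosRestrict F) := by
  set S := {m | ∃ A : MOSAlg, ∀ φ : Fin (Fintype.card E) ≃ E,
      MOSFeasible F (mosAcceptedSet A F φ) ∧ m ≤ (mosAcceptedSet A F φ).card} with hS
  have hzero : (0 : ℕ) ∈ S := by
    refine ⟨(fun _ _ => false : MOSAlg), fun φ => ?_⟩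
    have : mosAcceptedSet (fun _ _ => false : MOSAlg) F φ = ∅ := by
      ext e
      simp [mosAcceptedSet, mosAccepts]
    rw [this]
    exact ⟨fun B hB hsub => h0 (by rwa [Finset.subset_empty.mp hsub] at hB), Nat.zero_le _⟩
  have hmem : mosOnlineNum F ∈ S := Nat.sSup_mem ⟨0, hzero⟩ (mso_bddAbove F)
  obtain ⟨A, hA⟩ := hmem
  apply le_csSup (mso_bddAbove (mosRestrict F))
  refine ⟨A, fun φ' => ?_⟩
  set φ := ((finCongr (card_nonIso F hni).symm).trans
    (φ'.trans (Equiv.subtypeUnivEquiv hni))) with hφ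
  have himg := acceptedSet_restrict F hni A φ'
  constructor
  · intro B hB hsub
    exact (hA φ).1 (B.image Subtype.val) hB
      (by rw [← himg]; exact Finset.image_subset_image hsub)
  · have hcard : (mosAcceptedSet A (mosRestrict F) φ').card = (mosAcceptedSet A F φ).card := by
      rw [← himg]
      exact (Finset.card_image_of_injective _ Subtype.val_injective).symm
    rw [hcard]
    exact (hA φ).2

lemma indep_le_gmos [Fintype E] [DecidableEq E] (F : Set (Finset E))
    (hF : ∀ B ∈ F, ∀ C : Finset E, B ⊆ C → C ∈ F) (h0 : ∅ ∉ F)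
    (hni : ∀ e : E, ¬ MOSIsolated F e) :
    mosIndepDomNum (mosRestrict F) ≤ mosMinScore gmosAlg F := by
  refine le_csInf ⟨(mosAcceptedSet gmosAlg F (Fintype.equivFin E).symm).card,
    (Fintype.equivFin E).symm, rfl⟩ ?_
  rintro b ⟨φ, rfl⟩
  classical
  set G := mosAcceptedSet gmosAlg F φ with hG
  set G' : Finset {e : E // ¬ MOSIsolated F e} := G.subtype _ with hG'
  have hmemG' : ∀ x : {e : E // ¬ MOSIsolated F e}, x ∈ G' ↔ x.val ∈ G := by
    intro x; simp [hG', Finset.mem_subtype]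
  have himg : G'.image Subtype.val = G := by
    ext e
    simp only [Finset.mem_image]
    constructor
    · rintro ⟨x, hx, rfl⟩; exact (hmemG' x).mp hx
    · intro he; exact ⟨⟨e, hni e⟩, (hmemG' _).mpr he, rfl⟩
  have hcard : G'.card = G.card := by
    rw [← himg]; exact (Finset.card_image_of_injective _ Subtype.val_injective).symm
  apply Nat.sInf_le
  refine ⟨G', ?_, ?_, hcard⟩
  · -- feasible
    intro B hB hsub
    exact (gmos_feasible F hF h0 φ) (B.image Subtype.val) hB
      (by show Finset.image Subtype.val B ⊆ G
          rw [← himg]; exact Finset.image_subset_image hsub)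
  · -- maximal
    intro x hx hfeas
    have hxG : x.val ∉ G := fun hc => hx ((hmemG' x).mpr hc)
    have hins : insert x.val G ∈ F := gmos_maximal F hF φ hxG
    set B' : Finset {e : E // ¬ MOSIsolated F e} := (insert x.val G).subtype _ with hB'
    have himgB : B'.image Subtype.val = insert x.val G := by
      ext e
      simp only [Finset.mem_image, hB', Finset.mem_subtype]
      constructor
      · rintro ⟨y, hy, rfl⟩; exact hy
      · intro he; exact ⟨⟨e, hni e⟩, he, rfl⟩
    have hB'F : B' ∈ mosRestrict F := by
      show B'.image Subtype.val ∈ F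
      rw [himgB]; exact hins
    refine hfeas B' hB'F ?_
    intro y hy
    have : y.val ∈ insert x.val G := by
      rw [hB', Finset.mem_subtype] at hy; exact hy
    rcases Finset.mem_insert.mp this with h | h
    · exact Finset.mem_insert.mpr (Or.inl (Subtype.ext h))
    · exact Finset.mem_insert.mpr (Or.inr ((hmemG' y).mpr h))


/-- for a Maximum Online Set instance `(E, F)` with `F` closed under
supersets, if `k + s(E', F) ≥ MS^O(E', F)` — where `k` is the number of isolated elements
and `E'` the set of non-isolated elements — then the greedy algorithm achieves the optimal
worst-case number of accepted elements: `GMOS(E, F) = MS^O(E, F)`. -/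
theorem statement19 {E : Type} [Fintype E] [DecidableEq E] (F : Set (Finset E))
    (hF : ∀ B ∈ F, ∀ C : Finset E, B ⊆ C → C ∈ F)
    (h : mosOnlineNum (mosRestrict F) ≤
      Nat.card {e : E // MOSIsolated F e} + mosIndepDomNum (mosRestrict F)) :
    mosMinScore gmosAlg F = mosOnlineNum F := by
  by_cases h0 : ∅ ∈ F
  · exact case_empty_mem F hF h0
  rcases Set.eq_empty_or_nonempty F with hFe | ⟨B0, hB0⟩
  · refine le_antisymm (gmos_le_mso F hF h0) ?_
    rw [case_F_empty F hFe]
    exact mso_le_card F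
  · have hni : ∀ e : E, ¬ MOSIsolated F e := by
      intro e hiso
      exact hiso (insert e B0) (hF B0 hB0 _ (Finset.subset_insert _ _))
        (Finset.mem_insert_self _ _)
    have hk : Nat.card {e : E // MOSIsolated F e} = 0 := by
      have : IsEmpty {e : E // MOSIsolated F e} := ⟨fun x => hni x.1 x.2⟩
      exact Nat.card_of_isEmpty
    rw [hk, Nat.zero_add] at h
    refine le_antisymm (gmos_le_mso F hF h0) ?_
    calc mosOnlineNum F ≤ mosOnlineNum (mosRestrict F) := mso_le_restrict F h0 hni
      _ ≤ mosIndepDomNum (mosRestrict F) := h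
      _ ≤ mosMinScore gmosAlg F := indep_le_gmos F hF h0 hni

end OnlinePaper
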